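/- Let A and B be local rings and let B be an A-algebra such that: the structure map A → B is a local homomorphism, B is finitely generated as an A-module, B is an étale A-algebra, and the induced homomorphism of residue fields A/m_A → B/m_B is bijective. Then the structure map A → B is bijective, i.e., an isomorphism of rings. -/

import Mathlib

universe u

open IsLocalRing

/-- Key lemma: for a finite unramified local algebra, the maximal ideal of `B` is generated by
the maximal ideal of `A`. -/
lemma aux_maximalIdeal_le_map
    (A B : Type u) [CommRing A] [IsLocalRing A] [CommRing B] [IsLocalRing B]
    [Algebra A B] [IsLocalHom (algebraMap A B)] [Module.Finite A B]
    [Algebra.FormallyUnramified A B] :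
    maximalIdeal B ≤ (maximalIdeal A).map (algebraMap A B) := by
  set J := (maximalIdeal A).map (algebraMap A B) with hJ
  have hJle : J ≤ maximalIdeal B := Ideal.map_le_iff_le_comap.mpr
    (fun x hx hu => hx (isUnit_of_map_unit (algebraMap A B) x hu))
  have hJne : J ≠ ⊤ := fun e => (maximalIdeal.isMaximal B).ne_top (top_le_iff.mp (e ▸ hJle))
  haveI : Nontrivial (B ⧸ J) := Ideal.Quotient.nontrivial_iff.mpr hJne
  haveI : IsLocalRing (B ⧸ J) :=
    IsLocalRing.of_surjective' (Ideal.Quotient.mk J) Ideal.Quotient.mk_surjective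
  set k := A ⧸ maximalIdeal A with hk
  letI : Field k := Ideal.Quotient.field (maximalIdeal A)
  haveI : Module.Finite A (B ⧸ J) :=
    Module.Finite.of_surjective (Ideal.Quotient.mkₐ A J).toLinearMap Ideal.Quotient.mk_surjective
  haveI : Module.Finite k (B ⧸ J) := Module.Finite.of_restrictScalars_finite A k (B ⧸ J)
  haveI : Algebra.FormallyUnramified k (B ⧸ J) :=
    Algebra.FormallyUnramified.of_restrictScalars A k (B ⧸ J)
  haveI : Algebra.EssFiniteType k (B ⧸ J) := Algebra.EssFiniteType.of_finiteType k (B ⧸ J)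
  haveI : IsReduced (B ⧸ J) := Algebra.FormallyUnramified.isReduced_of_field k (B ⧸ J)
  haveI : IsArtinianRing (B ⧸ J) := isArtinian_of_tower k inferInstance
  have hnil : IsNilpotent (maximalIdeal (B ⧸ J)) := by
    rw [← IsLocalRing.jacobson_eq_maximalIdeal (⊥ : Ideal (B ⧸ J)) bot_ne_top]
    exact IsArtinianRing.isNilpotent_jacobson_bot
  have hbot : maximalIdeal (B ⧸ J) = ⊥ := by
    obtain ⟨n, hn⟩ := hnil
    rw [eq_bot_iff]
    intro x hx
    have : x ^ n = 0 := by
      have := Ideal.pow_mem_pow hx n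
      rw [hn] at this
      simpa using this
    simpa using IsNilpotent.eq_zero ⟨n, this⟩
  intro x hx
  have hmem : Ideal.Quotient.mk J x ∈ maximalIdeal (B ⧸ J) := by
    intro hu
    obtain ⟨y, hy⟩ : ∃ y, (Ideal.Quotient.mk J) x * (Ideal.Quotient.mk J) y = 1 := by
      obtain ⟨v, hv⟩ := hu.exists_right_inv
      obtain ⟨y, rfl⟩ := Ideal.Quotient.mk_surjective v
      exact ⟨y, hv⟩
    have hxy : x * y - 1 ∈ maximalIdeal B := by
      apply hJle
      rw [← Ideal.Quotient.eq_zero_iff_mem]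
      simp [hy]
    have : IsUnit (x * y) := by
      by_contra hxyu
      have h1 : x * y ∈ maximalIdeal B := hxyu
      have : (1 : B) ∈ maximalIdeal B := by
        have h2 := Submodule.sub_mem _ h1 hxy
        simp at h2
      exact (maximalIdeal.isMaximal B).ne_top (Ideal.eq_top_of_unit_mem _ _ 1 this (mul_one 1))
    exact hx (isUnit_of_mul_isUnit_left this)
  rw [hbot] at hmem
  rwa [Submodule.mem_bot, Ideal.Quotient.eq_zero_iff_mem] at hmem

/-- A finite étale morphism of local rings that is a local homomorphism and induces an
isomorphism on residue fields is an isomorphism. -/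
theorem finite_etale_local_iso_on_residue_fields_is_iso
    (A B : Type u) [CommRing A] [IsLocalRing A] [CommRing B] [IsLocalRing B]
    [Algebra A B] [IsLocalHom (algebraMap A B)] [Module.Finite A B]
    [Algebra.Etale A B]
    (h : Function.Bijective (IsLocalRing.ResidueField.map (algebraMap A B))) :
    Function.Bijective (algebraMap A B) := by
  have key := aux_maximalIdeal_le_map A B
  -- Surjectivity via Nakayama
  have h1 : (⊤ : Submodule A B) ≤
      LinearMap.range (Algebra.linearMap A B) ⊔ (maximalIdeal A) • ⊤ := by
    rintro b -
    obtain ⟨r, hr⟩ := h.surjective (residue B b)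
    obtain ⟨a, rfl⟩ := residue_surjective r
    have hb : b - algebraMap A B a ∈ maximalIdeal B := by
      rw [← residue_eq_zero_iff, map_sub, ← ResidueField.map_residue (algebraMap A B) a, hr,
        sub_self]
    have hb2 : b - algebraMap A B a ∈ (maximalIdeal A) • (⊤ : Submodule A B) := by
      rw [Ideal.smul_top_eq_map]
      exact key hb
    have : b = algebraMap A B a + (b - algebraMap A B a) := by ring
    rw [this]
    exact Submodule.add_mem_sup ⟨a, rfl⟩ hb2
  have hs : Function.Surjective (algebraMap A B) := by
    have h2 := Submodule.le_of_le_smul_of_le_jacobson_bot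
      (Module.Finite.fg_top (R := A) (M := B)) (maximalIdeal_le_jacobson ⊥) h1
    intro b
    exact h2 Submodule.mem_top
  refine ⟨?_, hs⟩
  -- Injectivity
  set I := RingHom.ker (algebraMap A B) with hI
  have hIle : I ≤ maximalIdeal A := by
    intro x hx hu
    rw [RingHom.mem_ker] at hx
    exact (hx ▸ hu.map (algebraMap A B)).ne_zero rfl
  have hfg : I.FG := by
    have := Algebra.FinitePresentation.ker_fG_of_surjective (Algebra.ofId A B) hs
    exact this
  -- formal smoothness gives I = I²
  have hle2 : I ^ 2 ≤ I := Ideal.pow_le_self two_ne_zero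
  let g : (A ⧸ I ^ 2) →ₐ[A] B := Ideal.Quotient.liftₐ (I ^ 2) (Algebra.ofId A B)
    (fun a ha => RingHom.mem_ker.mp (hle2 ha))
  have hgs : Function.Surjective g := by
    intro b
    obtain ⟨a, ha⟩ := hs b
    exact ⟨Ideal.Quotient.mk _ a, ha⟩
  have hkerle : RingHom.ker (g : (A ⧸ I ^ 2) →+* B) ≤ I.map (Ideal.Quotient.mk (I ^ 2)) := by
    intro y hy
    obtain ⟨a, rfl⟩ := Ideal.Quotient.mk_surjective y
    rw [RingHom.mem_ker] at hy
    have : a ∈ I := by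
      rw [hI, RingHom.mem_ker]
      exact hy
    exact Ideal.mem_map_of_mem _ this
  have hnil : IsNilpotent (RingHom.ker (g : (A ⧸ I ^ 2) →+* B)) := by
    refine ⟨2, ?_⟩
    have h2 : (RingHom.ker (g : (A ⧸ I ^ 2) →+* B)) ^ 2 ≤
        (I.map (Ideal.Quotient.mk (I ^ 2))) ^ 2 := Ideal.pow_right_mono hkerle 2
    rw [← Ideal.map_pow, Ideal.map_quotient_self] at h2
    exact le_bot_iff.mp h2
  let τ : B →ₐ[A] A ⧸ I ^ 2 :=
    Algebra.FormallySmooth.liftOfSurjective (AlgHom.id A B) g hgs hnil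
  have hI2 : I ≤ I • I := by
    intro x hx
    have hc := τ.commutes x
    have hx0 : algebraMap A B x = 0 := hx
    rw [hx0, map_zero] at hc
    have : x ∈ I ^ 2 := by
      rw [← Ideal.Quotient.eq_zero_iff_mem]
      exact hc.symm
    rwa [smul_eq_mul, ← pow_two]
  have hbot : I = ⊥ := Submodule.eq_bot_of_le_smul_of_le_jacobson_bot (maximalIdeal A) I hfg
    (le_trans hI2 (Submodule.smul_mono_left hIle)) (maximalIdeal_le_jacobson ⊥)
  exact (RingHom.injective_iff_ker_eq_bot _).mpr hbot
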